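/- Let I = (G,q,π) be an instance of Unique Label Cover with φ_G ≥ φ for some φ > 0, and let G' be its label-extended graph. Then every nonempty subset S' of the vertex set of G' with μ_{G'}(S') ≤ μ_{G'}/(q+1) satisfies φ_{G'}(S') ≥ φ/(q(q+1)); that is, φ_{G'}(q+1) ≥ φ/(q(q+1)). -/

import Mathlib

open scoped Classical
open Matrix

noncomputable section

namespace Sublinear

variable {V : Type*}

/-- The degree `d(v)` of a vertex, as a real number. -/
def deg [Fintype V] (G : SimpleGraph V) (v : V) : ℝ :=
  ((Finset.univ.filter fun u => G.Adj v u).card : ℝ)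

/-- The volume `μ_G(S)` of a set of vertices. -/
def vol [Fintype V] (G : SimpleGraph V) (S : Set V) : ℝ :=
  ∑ v ∈ Finset.univ.filter (fun v => v ∈ S), deg G v

/-- The number of ordered adjacent pairs `(u,v)` with `u ∈ S`, `v ∈ T`.
For disjoint `S`, `T` this equals the number `e_G(S,T)` of edges between `S` and `T`. -/
def eB [Fintype V] (G : SimpleGraph V) (S T : Set V) : ℝ :=
  (((Finset.univ : Finset (V × V)).filter
      fun p => p.1 ∈ S ∧ p.2 ∈ T ∧ G.Adj p.1 p.2).card : ℝ)

/-- The number `e_G(S)` of edges with both endpoints in `S`. -/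
def eIn [Fintype V] (G : SimpleGraph V) (S : Set V) : ℝ := eB G S S / 2

/-- The conductance `φ_G(S)` of a set of vertices. -/
def cond [Fintype V] (G : SimpleGraph V) (S : Set V) : ℝ :=
  eB G S Sᶜ / vol G S

/-- The conductance `φ_G` of the graph: the minimum of `φ_G(S)` over nonempty `S`
with `μ_G(S) ≤ μ_G/2`. -/
def conductance [Fintype V] (G : SimpleGraph V) : ℝ :=
  sInf {x | ∃ S : Set V, S.Nonempty ∧ vol G S ≤ vol G Set.univ / 2 ∧ x = cond G S}

/-- The label-extended graph `G'` of a Unique Label Cover instance `I = (G, q, π)`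
(with labels `Fin q`): vertices are pairs `(u,i)`, and `(u,i)` is adjacent to
`(v,j)` iff `{u,v}` is an edge of `G` and `j = π u v i`. -/
def ulcExt {V : Type*} (G : SimpleGraph V) {q : ℕ} (π : V → V → Equiv.Perm (Fin q))
    (hπ : ∀ u v, G.Adj u v → π v u = (π u v)⁻¹) : SimpleGraph (V × Fin q) where
  Adj p p' := G.Adj p.1 p'.1 ∧ p'.2 = π p.1 p'.1 p.2
  symm := ⟨by
    rintro ⟨u, i⟩ ⟨v, j⟩ ⟨hadj, hj⟩
    refine ⟨hadj.symm, ?_⟩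
    simp only at hj ⊢
    rw [hπ u v hadj, hj]
    simp⟩
  loopless := ⟨by
    rintro ⟨u, i⟩ ⟨hadj, _⟩
    exact G.loopless.irrefl u hadj⟩

/-- The fraction of the edges of `G` that are satisfied by the assignment `ψ`
in the Unique Label Cover instance `(G, q, π)`: an edge `{u,v}` is satisfied
if `ψ v = π u v (ψ u)`. -/
def ulcSatFrac [Fintype V] (G : SimpleGraph V) {q : ℕ}
    (π : V → V → Equiv.Perm (Fin q)) (ψ : V → Fin q) : ℝ :=
  (((Finset.univ : Finset (V × V)).filter
      fun p => G.Adj p.1 p.2 ∧ ψ p.2 = π p.1 p.2 (ψ p.1)).card : ℝ)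
    / eB G Set.univ Set.univ

lemma filter_inst2 {a : Type*} (p : a -> Prop) (h1 h2 : DecidablePred p) (s : Finset a) :
    @Finset.filter a p h1 s = @Finset.filter a p h2 s :=
  congrArg (fun h : DecidablePred p => @Finset.filter a p h s) (Subsingleton.elim h1 h2)

lemma deg_nonneg' [Fintype V] (G : SimpleGraph V) (v : V) : 0 ≤ deg G v :=
  Nat.cast_nonneg _

lemma vol_nonneg' [Fintype V] (G : SimpleGraph V) (S : Set V) : 0 ≤ vol G S :=
  Finset.sum_nonneg fun v _ => deg_nonneg' G v

lemma eB_nonneg' [Fintype V] (G : SimpleGraph V) (S T : Set V) : 0 ≤ eB G S T :=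
  Nat.cast_nonneg _

lemma cond_nonneg' [Fintype V] (G : SimpleGraph V) (S : Set V) : 0 ≤ cond G S :=
  div_nonneg (eB_nonneg' G S Sᶜ) (vol_nonneg' G S)

lemma conductance_le' [Fintype V] (G : SimpleGraph V) {S : Set V} (hS : S.Nonempty)
    (hvol : vol G S ≤ vol G Set.univ / 2) : conductance G ≤ cond G S := by
  apply csInf_le
  · exact ⟨0, by rintro x ⟨T, _, _, rfl⟩; exact cond_nonneg' G T⟩
  · exact ⟨S, hS, hvol, rfl⟩

lemma vol_pos' [Fintype V] (G : SimpleGraph V) (hdeg : ∀ v, 1 ≤ deg G v) {S : Set V}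
    (hS : S.Nonempty) : 0 < vol G S := by
  obtain ⟨v, hv⟩ := hS
  have h1 : deg G v ≤ vol G S := by
    apply Finset.single_le_sum (fun u _ => deg_nonneg' G u)
    simp [hv]
  linarith [hdeg v]

lemma vol_compl' [Fintype V] (G : SimpleGraph V) (S : Set V) :
    vol G Sᶜ = vol G Set.univ - vol G S := by
  have h := Finset.sum_filter_add_sum_filter_not Finset.univ (fun v => v ∈ S) (deg G)
  unfold vol
  simp only [Set.mem_compl_iff, Set.mem_univ, Finset.filter_true]
  linarith

lemma eB_comm' [Fintype V] (G : SimpleGraph V) (S T : Set V) : eB G S T = eB G T S := by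
  unfold eB
  norm_cast
  apply Finset.card_nbij' Prod.swap Prod.swap
  · rintro ⟨a, b⟩ hp
    simp only [Finset.mem_coe, Finset.mem_filter, Finset.mem_univ, true_and] at hp ⊢
    exact ⟨hp.2.1, hp.1, hp.2.2.symm⟩
  · rintro ⟨a, b⟩ hp
    simp only [Finset.mem_coe, Finset.mem_filter, Finset.mem_univ, true_and] at hp ⊢
    exact ⟨hp.2.1, hp.1, hp.2.2.symm⟩
  · rintro ⟨a, b⟩ _; rfl
  · rintro ⟨a, b⟩ _; rfl

lemma deg_ulcExt' [Fintype V] (G : SimpleGraph V) {q : ℕ}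
    (π : V → V → Equiv.Perm (Fin q))
    (hπ : ∀ u v, G.Adj u v → π v u = (π u v)⁻¹) (u : V) (i : Fin q) :
    deg (ulcExt G π hπ) (u, i) = deg G u := by
  unfold deg
  norm_cast
  apply Finset.card_nbij' Prod.fst (fun v => (v, π u v i))
  · rintro ⟨v, j⟩ hp
    simp only [Finset.mem_coe, Finset.mem_filter, Finset.mem_univ, true_and] at hp ⊢
    simp only [ulcExt] at hp ⊢
    exact hp.1
  · intro v hv
    simp only [Finset.mem_coe, Finset.mem_filter, Finset.mem_univ, true_and] at hv ⊢
    simp only [ulcExt] at hv ⊢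
    exact ⟨hv, trivial⟩
  · rintro ⟨v, j⟩ hp
    simp only [Finset.mem_coe, Finset.mem_filter, Finset.mem_univ, true_and] at hp
    simp only [ulcExt] at hp
    simp [hp.2]
  · intro v hv
    rfl

lemma vol_ulcExt_univ' [Fintype V] (G : SimpleGraph V) {q : ℕ}
    (π : V → V → Equiv.Perm (Fin q))
    (hπ : ∀ u v, G.Adj u v → π v u = (π u v)⁻¹) :
    vol (ulcExt G π hπ) Set.univ = q * vol G Set.univ := by
  unfold vol
  simp only [Set.mem_univ, Finset.filter_true]
  rw [Fintype.sum_prod_type]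
  rw [Finset.mul_sum]
  apply Finset.sum_congr rfl
  intro u _
  have : ∀ i : Fin q, deg (ulcExt G π hπ) (u, i) = deg G u := deg_ulcExt' G π hπ u
  simp [this, Finset.sum_const, mul_comm]

/-- If `I = (G,q,π)` is a Unique Label Cover instance with
`φ_G ≥ φ > 0` and `G'` is its label-extended graph, then every nonempty set `S'`
of vertices of `G'` with `μ_{G'}(S') ≤ μ_{G'}/(q+1)` has conductance at least
`φ/(q(q+1))`; that is, `φ_{G'}(q+1) ≥ φ/(q(q+1))`. -/
theorem ulc_label_extended_expansion
    {V : Type*} [Fintype V] (G : SimpleGraph V)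
    (hdeg : ∀ v, 1 ≤ deg G v)
    (q : ℕ) (hq : 1 ≤ q)
    (π : V → V → Equiv.Perm (Fin q))
    (hπ : ∀ u v, G.Adj u v → π v u = (π u v)⁻¹)
    (φ : ℝ) (hφ : 0 < φ) (hcond : φ ≤ conductance G) :
    ∀ S' : Set (V × Fin q), S'.Nonempty →
      vol (ulcExt G π hπ) S' ≤ vol (ulcExt G π hπ) Set.univ / (q + 1) →
      φ / (q * (q + 1)) ≤ cond (ulcExt G π hπ) S' := by
  classical
  intro S' hS'ne hS'vol
  set G' := ulcExt G π hπ with hG'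
  have hq0 : (0:ℝ) < q := by exact_mod_cast Nat.lt_of_lt_of_le Nat.zero_lt_one hq
  have hdeg' : ∀ p : V × Fin q, 1 ≤ deg G' p := by
    rintro ⟨u, i⟩; rw [hG', deg_ulcExt']; exact hdeg u
  set S : Set V := {u | ∃ i, (u, i) ∈ S'} with hSdef
  let f : V → Fin q := fun u => if h : ∃ i, (u, i) ∈ S' then h.choose else ⟨0, hq⟩
  have hfS : ∀ u, u ∈ S → (u, f u) ∈ S' := by
    intro u hu
    have hu' : ∃ i, (u, i) ∈ S' := hu
    simp only [f, dif_pos hu']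
    exact hu'.choose_spec
  have hS'S : ∀ p : V × Fin q, p ∈ S' → p.1 ∈ S := by
    intro p hp
    exact ⟨p.2, by rwa [Prod.mk.eta]⟩
  have hSnon : S.Nonempty := by
    obtain ⟨p, hp⟩ := hS'ne
    exact ⟨p.1, hS'S p hp⟩
  set m := vol G' S' with hmdef
  have hm : 0 < m := vol_pos' G' hdeg' hS'ne
  set volU := vol G Set.univ with hvolUdef
  have hvolU' : vol G' Set.univ = q * volU := vol_ulcExt_univ' G π hπ
  -- (a) vol G S ≤ m
  have ha : vol G S ≤ m := by
    have hinj : ∀ x ∈ Finset.univ.filter (fun v => v ∈ S),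
        ∀ y ∈ Finset.univ.filter (fun v => v ∈ S),
        (fun u => (u, f u)) x = (fun u => (u, f u)) y → x = y := by
      intro x _ y _ h
      exact congrArg Prod.fst h
    have h1 : vol G S = ∑ p ∈ (Finset.univ.filter (fun v => v ∈ S)).image
        (fun u => (u, f u)), deg G' p := by
      rw [Finset.sum_image hinj, vol]
      refine Finset.sum_congr ?_ fun u _ => (deg_ulcExt' G π hπ u (f u)).symm
      exact filter_inst2 _ _ _ _
    rw [hmdef, h1]
    apply Finset.sum_le_sum_of_subset_of_nonneg
    · intro p hp
      simp only [Finset.mem_image, Finset.mem_filter, Finset.mem_univ, true_and] at hp ⊢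
      obtain ⟨u, hu, rfl⟩ := hp
      exact hfS u hu
    · intro p _ _
      exact deg_nonneg' G' p
  -- (b) m ≤ q * vol G S
  have hb : m ≤ q * vol G S := by
    have hsub : Finset.univ.filter (fun p : V × Fin q => p ∈ S') ⊆
        (Finset.univ.filter (fun v => v ∈ S)) ×ˢ Finset.univ := by
      intro p hp
      simp only [Finset.mem_filter, Finset.mem_univ, true_and, Finset.mem_product] at hp ⊢
      exact ⟨hS'S p hp, trivial⟩
    calc m = ∑ p ∈ Finset.univ.filter (fun p : V × Fin q => p ∈ S'), deg G' p := rfl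
      _ ≤ ∑ p ∈ (Finset.univ.filter (fun v => v ∈ S)) ×ˢ Finset.univ, deg G' p :=
          Finset.sum_le_sum_of_subset_of_nonneg hsub (fun p _ _ => deg_nonneg' G' p)
      _ = ∑ u ∈ Finset.univ.filter (fun v => v ∈ S), ∑ i : Fin q, deg G' (u, i) :=
          Finset.sum_product _ _ _
      _ = ∑ u ∈ Finset.univ.filter (fun v => v ∈ S), (q : ℝ) * deg G u := by
          apply Finset.sum_congr rfl
          intro u _
          simp only [hG', deg_ulcExt', Finset.sum_const, Finset.card_univ, Fintype.card_fin,
            nsmul_eq_mul]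
      _ = q * vol G S := by
          rw [vol, Finset.mul_sum]
          exact Finset.sum_congr (filter_inst2 _ _ _ _) fun _ _ => rfl
  have h1 : m / q ≤ vol G S := (div_le_iff₀' hq0).mpr hb
  -- volume of complement
  have hvolc : m / q ≤ vol G Sᶜ := by
    rw [vol_compl' G S]
    have hS'vol' : m ≤ q * volU / (q + 1) := by rwa [hvolU'] at hS'vol
    have h3 : m * (q + 1) ≤ q * volU := (le_div_iff₀ (by positivity)).mp hS'vol'
    rw [div_le_iff₀ hq0]
    nlinarith [ha, h3, hq0, mul_nonneg (sub_nonneg.mpr ha) hq0.le]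
  have hScnon : Sᶜ.Nonempty := by
    by_contra hcon
    rw [Set.not_nonempty_iff_eq_empty] at hcon
    have h0 : vol G Sᶜ = 0 := by
      rw [hcon]
      simp [vol]
    have : (0:ℝ) < m / q := div_pos hm hq0
    rw [h0] at hvolc
    linarith
  -- (c) cut comparison
  have hcut_le : eB G S Sᶜ ≤ eB G' S' S'ᶜ := by
    unfold eB
    refine Nat.cast_le.mpr ?_
    refine Finset.card_le_card_of_injOn
      (fun p : V × V => (((p.1, f p.1) : V × Fin q), ((p.2, π p.1 p.2 (f p.1)) : V × Fin q)))
      ?_ ?_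
    · intro p hp
      simp only [Finset.mem_coe, Finset.mem_filter, Finset.mem_univ, true_and] at hp ⊢
      obtain ⟨h1', h2', h3'⟩ := hp
      refine ⟨hfS _ h1', ?_, h3', rfl⟩
      intro hmem
      exact (Set.mem_compl_iff _ _).mp h2' (hS'S _ hmem)
    · intro p _ p' _ hpp
      simp only [Prod.mk.injEq] at hpp
      exact Prod.ext hpp.1.1 hpp.2.1
  -- key bound on the cut of S in G
  have hkey : φ * (m / q) ≤ eB G S Sᶜ := by
    rcases le_or_gt (vol G S) (volU / 2) with hle | hgt
    · have h := le_trans hcond (conductance_le' G hSnon hle)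
      have hvpos : 0 < vol G S := lt_of_lt_of_le (div_pos hm hq0) h1
      unfold cond at h
      have h2 := (le_div_iff₀ hvpos).mp h
      calc φ * (m / q) ≤ φ * vol G S := by
            exact mul_le_mul_of_nonneg_left h1 hφ.le
        _ ≤ eB G S Sᶜ := h2
    · have hcle : vol G Sᶜ ≤ volU / 2 := by
        rw [vol_compl' G S]
        linarith
      have h := le_trans hcond (conductance_le' G hScnon hcle)
      have hvpos : 0 < vol G Sᶜ := lt_of_lt_of_le (div_pos hm hq0) hvolc
      unfold cond at h
      rw [compl_compl] at h
      have h2 := (le_div_iff₀ hvpos).mp h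
      rw [eB_comm' G S Sᶜ]
      calc φ * (m / q) ≤ φ * vol G Sᶜ := by
            exact mul_le_mul_of_nonneg_left hvolc hφ.le
        _ ≤ eB G Sᶜ S := h2
  have hE : φ * (m / q) ≤ eB G' S' S'ᶜ := le_trans hkey hcut_le
  have hqq : (0:ℝ) < q * (q + 1) := by positivity
  show φ / (q * (q + 1)) ≤ eB G' S' S'ᶜ / m
  rw [div_le_div_iff₀ hqq hm]
  have hEq : m / q * q = m := div_mul_cancel₀ m (ne_of_gt hq0)
  have h4 : φ * m ≤ eB G' S' S'ᶜ * q := by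
    have h5 := mul_le_mul_of_nonneg_right hE hq0.le
    calc φ * m = φ * (m / q) * q := by rw [mul_assoc, hEq]
      _ ≤ eB G' S' S'ᶜ * q := h5
  have h6 : eB G' S' S'ᶜ * q ≤ eB G' S' S'ᶜ * (q * (q + 1)) := by
    apply mul_le_mul_of_nonneg_left ?_ (eB_nonneg' G' S' S'ᶜ)
    nlinarith [hq0]
  linarith

end Sublinear
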